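/- Let M(T,h,w) denote the maximum cover size over all valid partial tilings of the h×w grid, and r(T,w) the maximum cover size over all valid partial tilings of the 1×w row. Then ⌈h/2⌉ · r(T,w) ≥ (1/2) · M(T,h,w); consequently, there exists a valid partial tiling of the h×w grid (namely, maximum row covers placed on the odd rows and voids on the even rows) whose cover size is at least half of M(T,h,w). -/
import Mathlib


open scoped Classical

/-- Validity of a partial tiling: adjacent cells that both hold tiles must have
matching colors on their shared edge. -/
def ValidPartial {C T : Type} {h w : ℕ} (tn tw ts te : T → C)
    (τ : Fin h → Fin w → Option T) : Prop :=
  (∀ (i : Fin h) (j : Fin w) (hi : i.val + 1 < h) (p q : T),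
      τ i j = some p → τ ⟨i.val + 1, hi⟩ j = some q → ts p = tn q) ∧
  (∀ (i : Fin h) (j : Fin w) (hj : j.val + 1 < w) (p q : T),
      τ i j = some p → τ i ⟨j.val + 1, hj⟩ = some q → te p = tw q)

/-- Number of cells holding a tile. -/
def coverSize {T : Type} {h w : ℕ} (τ : Fin h → Fin w → Option T) : ℕ :=
  (Finset.univ.filter fun p : Fin h × Fin w => (τ p.1 p.2).isSome).card

/-- Validity of a partial row tiling. -/
def ValidRow {C T : Type} {w : ℕ} (tw te : T → C) (ρ : Fin w → Option T) : Prop :=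
  ∀ (j : Fin w) (hj : j.val + 1 < w) (p q : T),
    ρ j = some p → ρ ⟨j.val + 1, hj⟩ = some q → te p = tw q

/-- Cover size of a partial row tiling. -/
def rowCover {T : Type} {w : ℕ} (ρ : Fin w → Option T) : ℕ :=
  (Finset.univ.filter fun j : Fin w => (ρ j).isSome).card

/-- r(T,w): the maximum cover size over all valid partial row tilings of width w. -/
noncomputable def maxRowCover {C T : Type} [Fintype T] (w : ℕ) (tw te : T → C) : ℕ :=
  (Finset.univ.filter fun ρ : Fin w → Option T => ValidRow tw te ρ).sup rowCover

/-- M(T,h,w): the maximum cover size over all valid partial tilings of the h×w grid. -/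
noncomputable def maxCover {C T : Type} [Fintype T] (h w : ℕ) (tn tw ts te : T → C) : ℕ :=
  (Finset.univ.filter fun τ : Fin h → Fin w → Option T =>
    ValidPartial tn tw ts te τ).sup coverSize


lemma card_even_range (h : ℕ) :
    ((Finset.range h).filter (fun i => i % 2 = 0)).card = (h + 1) / 2 := by
  induction h with
  | zero => simp
  | succ n ih =>
    rw [Finset.range_add_one, Finset.filter_insert]
    split
    · rw [Finset.card_insert_of_notMem (by simp), ih]; omega
    · rw [ih]; omega

lemma card_even_fin (h : ℕ) :
    (Finset.univ.filter (fun i : Fin h => i.val % 2 = 0)).card = (h + 1) / 2 := by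
  rw [Finset.card_filter, Fin.sum_univ_eq_sum_range (fun i => if i % 2 = 0 then 1 else 0),
    ← Finset.card_filter, card_even_range]

lemma coverSize_sum {T : Type} {h w : ℕ} (τ : Fin h → Fin w → Option T) :
    coverSize τ = ∑ i : Fin h, rowCover (τ i) := by
  simp only [coverSize, rowCover, Finset.card_filter, Fintype.sum_prod_type]

theorem stmt_8 {C T : Type} [Fintype T] {h w : ℕ} (tn tw ts te : T → C) :
    (1 / 2 : ℝ) * (maxCover h w tn tw ts te : ℝ) ≤
      (((h + 1) / 2 : ℕ) : ℝ) * (maxRowCover w tw te : ℝ) ∧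
    ∃ τ : Fin h → Fin w → Option T,
      ValidPartial tn tw ts te τ ∧
      (1 / 2 : ℝ) * (maxCover h w tn tw ts te : ℝ) ≤ (coverSize τ : ℝ) := by
  set r := maxRowCover (C := C) (T := T) w tw te with hr
  -- every valid tiling has coverSize ≤ h * r
  have hMle : maxCover h w tn tw ts te ≤ h * r := by
    apply Finset.sup_le
    intro τ hτ
    rw [Finset.mem_filter] at hτ
    have hrow : ∀ i : Fin h, rowCover (τ i) ≤ r := by
      intro i
      apply Finset.le_sup (f := rowCover)
      rw [Finset.mem_filter]
      exact ⟨Finset.mem_univ _, fun j hj p q hp hq => hτ.2.2 i j hj p q hp hq⟩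
    calc coverSize τ = ∑ i : Fin h, rowCover (τ i) := coverSize_sum τ
      _ ≤ ∑ _i : Fin h, r := Finset.sum_le_sum (fun i _ => hrow i)
      _ = h * r := by simp [mul_comm]
  have hkey : (1 / 2 : ℝ) * (maxCover h w tn tw ts te : ℝ) ≤ (((h + 1) / 2 : ℕ) : ℝ) * r := by
    have h1 : (maxCover h w tn tw ts te : ℝ) ≤ (h : ℝ) * r := by exact_mod_cast hMle
    have h2 : (h : ℝ) * r ≤ 2 * (((h + 1) / 2 : ℕ) : ℝ) * r := by
      have : (h : ℝ) ≤ 2 * (((h + 1) / 2 : ℕ) : ℝ) := by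
        have : h ≤ 2 * ((h + 1) / 2) := by omega
        exact_mod_cast this
      exact mul_le_mul_of_nonneg_right this (by positivity)
    nlinarith
  refine ⟨hkey, ?_⟩
  -- pick a maximizing row
  have hne : (Finset.univ.filter fun ρ : Fin w → Option T => ValidRow tw te ρ).Nonempty := by
    refine ⟨fun _ => none, ?_⟩
    rw [Finset.mem_filter]
    exact ⟨Finset.mem_univ _, fun j hj p q hp => by simp at hp⟩
  obtain ⟨ρ, hρmem, hρ⟩ := Finset.exists_mem_eq_sup _ hne rowCover
  rw [Finset.mem_filter] at hρmem
  refine ⟨fun i j => if i.val % 2 = 0 then ρ j else none, ⟨?_, ?_⟩, ?_⟩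
  · intro i j hi p q hp hq
    by_cases he : i.val % 2 = 0
    · simp only [he] at hp hq
      have : (i.val + 1) % 2 ≠ 0 := by omega
      simp [this] at hq
    · simp [he] at hp
  · intro i j hj p q hp hq
    by_cases he : i.val % 2 = 0
    · simp only [he, if_true] at hp hq
      exact hρmem.2 j hj p q hp hq
    · simp [he] at hp
  · refine le_trans hkey ?_
    have : coverSize (fun (i : Fin h) (j : Fin w) => if i.val % 2 = 0 then ρ j else none)
        = ((h + 1) / 2) * rowCover ρ := by
      rw [coverSize_sum]
      have : ∀ i : Fin h, rowCover (fun j => if i.val % 2 = 0 then ρ j else none)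
          = if i.val % 2 = 0 then rowCover ρ else 0 := by
        intro i
        by_cases he : i.val % 2 = 0 <;> simp [rowCover, he]
      rw [Finset.sum_congr rfl (fun i _ => this i), Finset.sum_ite, Finset.sum_const,
        Finset.sum_const, card_even_fin h, smul_zero, add_zero, smul_eq_mul]
    rw [this, ← hρ]
    push_cast
    exact le_refl _
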